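/- Fix a real α > 0, an integer d ≥ 1, and an integer t ≥ 0. Define S_d(t) = Σ_{k=1}^d k^{−α}(1 − k^{−α})^t and I_d(t) = ∫_1^d k^{−α}(1 − k^{−α})^t dk. Then |S_d(t) − I_d(t)| ≤ δ_d(t), where δ_d(t) = (1/(1+t))·(1 − 1/(1+t))^t if 1 + t ≤ d^α, and δ_d(t) = d^{−α}·(1 − d^{−α})^t if 1 + t ≥ d^α. -/

import Mathlib

private lemma g_nonneg (t : ℕ) {x : ℝ} (h0 : 0 ≤ x) (h1 : x ≤ 1) :
    0 ≤ x * (1 - x) ^ t := mul_nonneg h0 (pow_nonneg (by linarith) t)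

private lemma g_mono (t : ℕ) {x y : ℝ} (hx : 0 ≤ x) (hxy : x ≤ y)
    (hy : (1 + (t : ℝ)) * y ≤ 1) : x * (1 - x) ^ t ≤ y * (1 - y) ^ t := by
  have ht : (0:ℝ) ≤ t := Nat.cast_nonneg t
  have hy0 : 0 ≤ y := hx.trans hxy
  have hy1 : y ≤ 1 := by nlinarith
  rcases lt_or_ge x 1 with hx1 | hx1
  · have h1x : (0:ℝ) < 1 - x := by linarith
    set a : ℝ := (x - y) / (1 - x) with ha
    have ha1 : (1:ℝ) + a = (1 - y) / (1 - x) := by rw [ha, eq_div_iff h1x.ne', add_mul, div_mul_cancel₀ _ h1x.ne']; ring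
    have ha2 : (-2:ℝ) ≤ a := by
      rw [ha, le_div_iff₀ h1x]; linarith
    have hB : 1 + (t : ℝ) * a ≤ (1 + a) ^ t := one_add_mul_le_pow ha2 t
    have hxy' : x ≤ y * (1 + (t : ℝ) * a) := by
      rw [ha, show y * (1 + (t:ℝ) * ((x - y) / (1 - x)))
            = (y * (1 - x) + (t:ℝ) * (y * (x - y))) / (1 - x) by field_simp [h1x.ne'],
          le_div_iff₀ h1x]
      nlinarith [mul_nonneg (sub_nonneg.2 hxy) (by nlinarith : (0:ℝ) ≤ 1 - x - (t:ℝ) * y)]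
    calc x * (1 - x) ^ t ≤ (y * (1 + (t:ℝ) * a)) * (1 - x) ^ t :=
          mul_le_mul_of_nonneg_right hxy' (pow_nonneg h1x.le t)
      _ ≤ (y * (1 + a) ^ t) * (1 - x) ^ t :=
          mul_le_mul_of_nonneg_right (mul_le_mul_of_nonneg_left hB hy0) (pow_nonneg h1x.le t)
      _ = y * (1 - y) ^ t := by
          rw [ha1, div_pow, mul_assoc, div_mul_cancel₀ _ (pow_ne_zero _ h1x.ne')]
  · have hy1' : 1 ≤ y := le_trans hx1 hxy
    have hyy : y = 1 := le_antisymm hy1 hy1'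
    have htt : (t : ℝ) = 0 := by nlinarith
    have ht0 : t = 0 := by exact_mod_cast htt
    subst ht0
    simpa using hxy

private lemma g_anti (t : ℕ) {x y : ℝ} (hx : 1 ≤ (1 + (t : ℝ)) * x) (hxy : x ≤ y)
    (hy : y ≤ 1) : y * (1 - y) ^ t ≤ x * (1 - x) ^ t := by
  have ht : (0:ℝ) ≤ t := Nat.cast_nonneg t
  have hx0 : 0 < x := by nlinarith
  have hx1 : x ≤ 1 := hxy.trans hy
  rcases lt_or_ge y 1 with hy1 | hy1
  · have h1y : (0:ℝ) < 1 - y := by linarith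
    set a : ℝ := (y - x) / (1 - y) with ha
    have ha0 : 0 ≤ a := div_nonneg (by linarith) h1y.le
    have ha1 : (1:ℝ) + a = (1 - x) / (1 - y) := by rw [ha, eq_div_iff h1y.ne', add_mul, div_mul_cancel₀ _ h1y.ne']; ring
    have hB : 1 + (t : ℝ) * a ≤ (1 + a) ^ t := one_add_mul_le_pow (by linarith) t
    have hxy' : y ≤ x * (1 + (t : ℝ) * a) := by
      rw [ha, show x * (1 + (t:ℝ) * ((y - x) / (1 - y)))
            = (x * (1 - y) + (t:ℝ) * (x * (y - x))) / (1 - y) by field_simp [h1y.ne'],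
          le_div_iff₀ h1y]
      nlinarith [mul_nonneg (sub_nonneg.2 hxy) (by nlinarith : (0:ℝ) ≤ (t:ℝ) * x - (1 - y))]
    calc y * (1 - y) ^ t ≤ (x * (1 + (t:ℝ) * a)) * (1 - y) ^ t :=
          mul_le_mul_of_nonneg_right hxy' (pow_nonneg h1y.le t)
      _ ≤ (x * (1 + a) ^ t) * (1 - y) ^ t :=
          mul_le_mul_of_nonneg_right (mul_le_mul_of_nonneg_left hB hx0.le) (pow_nonneg h1y.le t)
      _ = x * (1 - x) ^ t := by
          rw [ha1, div_pow, mul_assoc, div_mul_cancel₀ _ (pow_ne_zero _ h1y.ne')]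
  · have hyy : y = 1 := le_antisymm hy hy1
    subst hyy
    rcases Nat.eq_zero_or_pos t with ht0 | ht0
    · subst ht0; simp at hx ⊢; nlinarith
    · rw [sub_self, zero_pow ht0.ne', mul_zero]
      exact g_nonneg t hx0.le hx1

private lemma g_max (t : ℕ) {x : ℝ} (h0 : 0 ≤ x) (h1 : x ≤ 1) :
    x * (1 - x) ^ t ≤ (1 / (1 + (t:ℝ))) * (1 - 1 / (1 + (t:ℝ))) ^ t := by
  have ht : (0:ℝ) < 1 + t := by positivity
  rcases le_total x (1 / (1 + (t:ℝ))) with h | h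
  · exact g_mono t h0 h (by rw [mul_one_div, div_self ht.ne'])
  · exact g_anti t (by rw [mul_one_div, div_self ht.ne']) h h1


private lemma sum_bound (F J : ℕ → ℝ) (M : ℝ) (m n : ℕ) (hm : 1 ≤ m)
    (h1 : ∀ k, 1 ≤ k → k ≤ n → k + 1 ≤ m → F k ≤ J k ∧ J k ≤ F (k + 1))
    (h2 : ∀ k, m + 1 ≤ k → k ≤ n → F (k + 1) ≤ J k ∧ J k ≤ F k)
    (h3 : m ≤ n → min (F m) (F (m + 1)) ≤ J m ∧ J m ≤ M)
    (h4 : ∀ k, 1 ≤ k → k ≤ n + 1 → 0 ≤ F k ∧ F k ≤ M) :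
    |(∑ i ∈ Finset.range n, (F (i + 1) - J (i + 1))) + F (n + 1)| ≤ M := by
  have hM0 : 0 ≤ M := le_trans (h4 1 le_rfl (by omega)).1 (h4 1 le_rfl (by omega)).2
  have A : ∀ j, j ≤ n → (∑ i ∈ Finset.range j, (F (i + 1) - J (i + 1))) ≤
      if j + 1 ≤ m then 0 else max (F m) (F (m + 1)) - F (j + 1) := by
    intro j
    induction j with
    | zero => intro _; rw [if_pos (by omega)]; simp
    | succ j ih =>
      intro hj
      have ihj := ih (by omega)
      rw [Finset.sum_range_succ]
      rcases lt_trichotomy (j + 1) m with hc | hc | hc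
      · have hterm := h1 (j + 1) (by omega) (by omega) (by omega)
        rw [if_pos (by omega)] at ihj ⊢
        linarith [hterm.1]
      · have h3' := h3 (by omega)
        rw [if_pos (by omega)] at ihj
        rw [if_neg (by omega), hc]
        rcases le_total (F m) (F (m + 1)) with hh | hh
        · rw [max_eq_right hh]
          have hmin : min (F m) (F (m + 1)) = F m := min_eq_left hh
          linarith [h3'.1]
        · rw [max_eq_left hh]
          have hmin : min (F m) (F (m + 1)) = F (m + 1) := min_eq_right hh
          linarith [h3'.1]
      · have hterm := h2 (j + 1) (by omega) (by omega)
        rw [if_neg (by omega)] at ihj ⊢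
        linarith [hterm.1]
  have B : ∀ j, j ≤ n → (if j + 1 ≤ m then F 1 - F (j + 1) else F 1 - M) ≤
      ∑ i ∈ Finset.range j, (F (i + 1) - J (i + 1)) := by
    intro j
    induction j with
    | zero => intro _; rw [if_pos (by omega)]; simp
    | succ j ih =>
      intro hj
      have ihj := ih (by omega)
      rw [Finset.sum_range_succ]
      rcases lt_trichotomy (j + 1) m with hc | hc | hc
      · have hterm := h1 (j + 1) (by omega) (by omega) (by omega)
        rw [if_pos (by omega)] at ihj ⊢
        linarith [hterm.2]
      · have h3' := h3 (by omega)
        rw [if_pos (by omega)] at ihj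
        rw [if_neg (by omega)]
        rw [hc] at ihj ⊢
        linarith [h3'.2]
      · have hterm := h2 (j + 1) (by omega) (by omega)
        rw [if_neg (by omega)] at ihj ⊢
        linarith [hterm.2]
  have hA := A n le_rfl
  have hB := B n le_rfl
  rw [abs_le]
  constructor
  · have hF1 := (h4 1 le_rfl (by omega)).1
    have hFn := (h4 (n + 1) (by omega) le_rfl).1
    by_cases hc : n + 1 ≤ m
    · rw [if_pos hc] at hB; linarith
    · rw [if_neg hc] at hB; linarith
  · have hFn := h4 (n + 1) (by omega) le_rfl
    by_cases hc : n + 1 ≤ m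
    · rw [if_pos hc] at hA; linarith [hFn.2]
    · rw [if_neg hc] at hA
      have hFm := h4 m hm (by omega)
      have hFm1 := h4 (m + 1) (by omega) (by omega)
      rcases le_total (F m) (F (m + 1)) with hh | hh
      · rw [max_eq_right hh] at hA; linarith [hFm1.2]
      · rw [max_eq_left hh] at hA; linarith [hFm.2]

/-- Approximation error between the sum `S_d(t) = Σ_{k=1}^d k^{−α}(1 − k^{−α})^t`
and the integral `I_d(t) = ∫_1^d k^{−α}(1 − k^{−α})^t dk` is bounded by `δ_d(t)`. -/
theorem stmt3 (α : ℝ) (hα : 0 < α) (d : ℕ) (hd : 1 ≤ d) (t : ℕ) :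
    |(∑ k ∈ Finset.Icc 1 d, (k : ℝ) ^ (-α) * (1 - (k : ℝ) ^ (-α)) ^ (t : ℝ)) -
      ∫ k in (1 : ℝ)..(d : ℝ), k ^ (-α) * (1 - k ^ (-α)) ^ (t : ℝ)| ≤
    (if 1 + (t : ℝ) ≤ (d : ℝ) ^ α
      then (1 / (1 + (t : ℝ))) * (1 - 1 / (1 + (t : ℝ))) ^ (t : ℝ)
      else (d : ℝ) ^ (-α) * (1 - (d : ℝ) ^ (-α)) ^ (t : ℝ)) := by
  have ht0 : (0:ℝ) ≤ t := Nat.cast_nonneg t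
  have ht1 : (0:ℝ) < 1 + t := by linarith
  simp only [Real.rpow_natCast]
  set f : ℝ → ℝ := fun x => x ^ (-α) * (1 - x ^ (-α)) ^ t with hfdef
  set M : ℝ := if 1 + (t:ℝ) ≤ (d:ℝ) ^ α then (1 / (1 + (t:ℝ))) * (1 - 1 / (1 + (t:ℝ))) ^ t
      else (d:ℝ) ^ (-α) * (1 - (d:ℝ) ^ (-α)) ^ t with hMdef
  show |(∑ k ∈ Finset.Icc 1 d, f k) - ∫ x in (1:ℝ)..(d:ℝ), f x| ≤ M
  -- basic facts about u x = x ^ (-α)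
  have hu_pos : ∀ x : ℝ, 1 ≤ x → 0 < x ^ (-α) := fun x hx =>
    Real.rpow_pos_of_pos (by linarith) _
  have hu_le1 : ∀ x : ℝ, 1 ≤ x → x ^ (-α) ≤ 1 := fun x hx =>
    Real.rpow_le_one_of_one_le_of_nonpos hx (by linarith)
  have hu_anti : ∀ x y : ℝ, 1 ≤ x → x ≤ y → y ^ (-α) ≤ x ^ (-α) := by
    intro x y hx hxy
    have hx0 : (0:ℝ) < x := by linarith
    rw [Real.rpow_neg hx0.le, Real.rpow_neg (by linarith : (0:ℝ) ≤ y)]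
    exact inv_anti₀ (Real.rpow_pos_of_pos hx0 α) (Real.rpow_le_rpow hx0.le hxy hα.le)
  -- the critical point c
  set c : ℝ := (1 + (t:ℝ)) ^ (α⁻¹) with hcdef
  have hc1 : 1 ≤ c := by
    rw [hcdef]
    calc (1:ℝ) = 1 ^ (α⁻¹) := (Real.one_rpow _).symm
      _ ≤ (1 + (t:ℝ)) ^ (α⁻¹) := Real.rpow_le_rpow zero_le_one (by linarith) (by positivity)
  have hcα : c ^ α = 1 + (t:ℝ) := by
    rw [hcdef, ← Real.rpow_mul (by linarith : (0:ℝ) ≤ 1 + (t:ℝ)), inv_mul_cancel₀ hα.ne',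
      Real.rpow_one]
  have hge : ∀ x : ℝ, c ≤ x → (1 + (t:ℝ)) * x ^ (-α) ≤ 1 := by
    intro x hx
    have hx0 : (0:ℝ) < x := by linarith
    have hp : (0:ℝ) < x ^ α := Real.rpow_pos_of_pos hx0 α
    have h1 : 1 + (t:ℝ) ≤ x ^ α := by
      rw [← hcα]; exact Real.rpow_le_rpow (by linarith) hx hα.le
    rw [Real.rpow_neg hx0.le, ← div_eq_mul_inv, div_le_one hp]
    exact h1
  have hle : ∀ x : ℝ, 1 ≤ x → x ≤ c → 1 ≤ (1 + (t:ℝ)) * x ^ (-α) := by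
    intro x hx1 hx
    have hx0 : (0:ℝ) < x := by linarith
    have hp : (0:ℝ) < x ^ α := Real.rpow_pos_of_pos hx0 α
    have h1 : x ^ α ≤ 1 + (t:ℝ) := by
      rw [← hcα]; exact Real.rpow_le_rpow hx0.le hx hα.le
    rw [Real.rpow_neg hx0.le, ← div_eq_mul_inv, le_div_iff₀ hp, one_mul]
    exact h1
  -- facts about f
  have hf_nonneg : ∀ x : ℝ, 1 ≤ x → 0 ≤ f x := fun x hx =>
    g_nonneg t (hu_pos x hx).le (hu_le1 x hx)
  have hf_le_M : ∀ x : ℝ, 1 ≤ x → x ≤ d → f x ≤ M := by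
    intro x hx1 hxd
    rw [hMdef]
    by_cases hbr : 1 + (t:ℝ) ≤ (d:ℝ) ^ α
    · rw [if_pos hbr]
      exact g_max t (hu_pos x hx1).le (hu_le1 x hx1)
    · rw [if_neg hbr]
      push_neg at hbr
      have hd1 : (1:ℝ) ≤ (d:ℝ) := by exact_mod_cast hd
      have hdp : (0:ℝ) < (d:ℝ) ^ α := Real.rpow_pos_of_pos (by linarith) α
      have hx' : 1 ≤ (1 + (t:ℝ)) * (d:ℝ) ^ (-α) := by
        rw [Real.rpow_neg (by linarith : (0:ℝ) ≤ (d:ℝ)), ← div_eq_mul_inv, le_div_iff₀ hdp,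
          one_mul]
        exact hbr.le
      exact g_anti t hx' (hu_anti x (d:ℝ) hx1 hxd) (hu_le1 x hx1)
  have hf_mono : ∀ x y : ℝ, 1 ≤ x → x ≤ y → y ≤ c → f x ≤ f y := by
    intro x y hx hxy hyc
    exact g_anti t (hle y (by linarith) hyc) (hu_anti x y hx hxy) (hu_le1 x hx)
  have hf_anti : ∀ x y : ℝ, c ≤ x → x ≤ y → f y ≤ f x := by
    intro x y hx hxy
    have hx1 : 1 ≤ x := hc1.trans hx
    exact g_mono t (hu_pos y (by linarith)).le (hu_anti x y hx1 hxy) (hge x hx)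
  have hf_min : ∀ a x : ℝ, 1 ≤ a → a ≤ x → x ≤ a + 1 → min (f a) (f (a + 1)) ≤ f x := by
    intro a x ha hax hxa
    have hx1 : (1:ℝ) ≤ x := le_trans ha hax
    by_cases h : (1 + (t:ℝ)) * x ^ (-α) ≤ 1
    · refine le_trans (min_le_right _ _) ?_
      exact g_mono t (hu_pos (a + 1) (by linarith)).le (hu_anti x (a + 1) hx1 hxa) h
    · push_neg at h
      refine le_trans (min_le_left _ _) ?_
      exact g_anti t h.le (hu_anti a x ha hax) (hu_le1 a ha)
  -- integrability and integral bounds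
  have hf_cont : ∀ x : ℝ, 1 ≤ x → ContinuousAt f x := by
    intro x hx
    have hx0 : x ≠ 0 := by intro h; rw [h] at hx; norm_num at hx
    have h1 : ContinuousAt (fun y : ℝ => y ^ (-α)) x :=
      Real.continuousAt_rpow_const x (-α) (Or.inl hx0)
    exact h1.mul ((continuousAt_const.sub h1).pow t)
  have hf_int : ∀ a b : ℝ, 1 ≤ a → a ≤ b → IntervalIntegrable f MeasureTheory.volume a b := by
    intro a b ha hab
    apply ContinuousOn.intervalIntegrable
    intro x hx
    rw [Set.uIcc_of_le hab] at hx
    exact (hf_cont x (le_trans ha hx.1)).continuousWithinAt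
  have int_ge : ∀ a L : ℝ, 1 ≤ a → (∀ x ∈ Set.Icc a (a + 1), L ≤ f x) →
      L ≤ ∫ x in a..(a + 1), f x := by
    intro a L ha hL
    have h := intervalIntegral.integral_mono_on (by linarith : a ≤ a + 1)
      (intervalIntegrable_const (c := L)) (hf_int a (a + 1) ha (by linarith)) hL
    rw [intervalIntegral.integral_const] at h
    simpa using h
  have int_le : ∀ a U : ℝ, 1 ≤ a → (∀ x ∈ Set.Icc a (a + 1), f x ≤ U) →
      (∫ x in a..(a + 1), f x) ≤ U := by
    intro a U ha hU
    have h := intervalIntegral.integral_mono_on (by linarith : a ≤ a + 1)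
      (hf_int a (a + 1) ha (by linarith)) (intervalIntegrable_const (c := U)) hU
    rw [intervalIntegral.integral_const] at h
    simpa using h
  -- set up the discrete data
  set n : ℕ := d - 1 with hndef
  have hn1 : n + 1 = d := by omega
  set m : ℕ := ⌊c⌋₊ with hmdef
  have hm1 : 1 ≤ m := Nat.le_floor (by simpa using hc1)
  have hmc : (m:ℝ) ≤ c := Nat.floor_le (by linarith)
  have hcm : c < (m:ℝ) + 1 := Nat.lt_floor_add_one c
  have H1 : ∀ k : ℕ, 1 ≤ k → k ≤ n → k + 1 ≤ m →
      f k ≤ (∫ x in (k:ℝ)..((k:ℝ) + 1), f x) ∧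
        (∫ x in (k:ℝ)..((k:ℝ) + 1), f x) ≤ f ((k:ℝ) + 1) := by
    intro k hk1 hkn hkm
    have hk1' : (1:ℝ) ≤ (k:ℝ) := by exact_mod_cast hk1
    have hk1c : ((k:ℝ) + 1) ≤ c := by
      have h := hmc
      have : ((k:ℝ) + 1) ≤ (m:ℝ) := by exact_mod_cast hkm
      linarith
    constructor
    · exact int_ge k (f k) hk1' (fun x hx => hf_mono k x hk1' hx.1 (le_trans hx.2 hk1c))
    · exact int_le k (f ((k:ℝ) + 1)) hk1'
        (fun x hx => hf_mono x ((k:ℝ) + 1) (le_trans hk1' hx.1) hx.2 hk1c)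
  have H2 : ∀ k : ℕ, m + 1 ≤ k → k ≤ n →
      f ((k:ℝ) + 1) ≤ (∫ x in (k:ℝ)..((k:ℝ) + 1), f x) ∧
        (∫ x in (k:ℝ)..((k:ℝ) + 1), f x) ≤ f k := by
    intro k hmk hkn
    have hck : c ≤ (k:ℝ) := by
      have : ((m:ℝ) + 1) ≤ (k:ℝ) := by exact_mod_cast hmk
      linarith
    have hk1' : (1:ℝ) ≤ (k:ℝ) := le_trans hc1 hck
    constructor
    · exact int_ge k (f ((k:ℝ) + 1)) hk1'
        (fun x hx => hf_anti x ((k:ℝ) + 1) (le_trans hck hx.1) hx.2)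
    · exact int_le k (f k) hk1' (fun x hx => hf_anti k x hck hx.1)
  have H3 : m ≤ n →
      min (f m) (f ((m:ℝ) + 1)) ≤ (∫ x in (m:ℝ)..((m:ℝ) + 1), f x) ∧
        (∫ x in (m:ℝ)..((m:ℝ) + 1), f x) ≤ M := by
    intro hmn
    have hm1' : (1:ℝ) ≤ (m:ℝ) := by exact_mod_cast hm1
    have hmd : (m:ℝ) + 1 ≤ (d:ℝ) := by
      have : ((m:ℝ) + 1) ≤ ((n:ℝ) + 1) := by
        have : (m:ℝ) ≤ (n:ℝ) := by exact_mod_cast hmn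
        linarith
      have hnd : ((n:ℝ) + 1) = (d:ℝ) := by exact_mod_cast hn1
      linarith
    constructor
    · exact int_ge m _ hm1' (fun x hx => hf_min m x hm1' hx.1 hx.2)
    · exact int_le m M hm1'
        (fun x hx => hf_le_M x (le_trans hm1' hx.1) (le_trans hx.2 hmd))
  have H4 : ∀ k : ℕ, 1 ≤ k → k ≤ n + 1 → 0 ≤ f k ∧ f k ≤ M := by
    intro k hk1 hkn
    have hk1' : (1:ℝ) ≤ (k:ℝ) := by exact_mod_cast hk1
    have hkd : (k:ℝ) ≤ (d:ℝ) := by exact_mod_cast (by omega : k ≤ d)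
    exact ⟨hf_nonneg k hk1', hf_le_M k hk1' hkd⟩
  -- apply the abstract lemma
  have key := sum_bound (fun k : ℕ => f k) (fun k : ℕ => ∫ x in (k:ℝ)..((k:ℝ) + 1), f x)
    M m n hm1
    (fun k hk1 hkn hkm => by push_cast; exact H1 k hk1 hkn hkm)
    (fun k hmk hkn => by push_cast; exact H2 k hmk hkn)
    (fun hmn => by push_cast; exact H3 hmn)
    (fun k hk1 hkn => H4 k hk1 hkn)
  -- rewrite the goal into the shape of `key`
  have hsum1 : (∑ k ∈ Finset.Icc 1 d, f k) =
      (∑ i ∈ Finset.range n, f ((i + 1 : ℕ))) + f ((n + 1 : ℕ)) := by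
    rw [← Finset.Ico_add_one_right_eq_Icc, Finset.sum_Ico_eq_sum_range]
    have hd' : d + 1 - 1 = n + 1 := by omega
    rw [hd', Finset.sum_range_succ]
    congr 1
    · exact Finset.sum_congr rfl (fun i _ => by rw [Nat.add_comm 1 i])
    · rw [Nat.add_comm 1 n]
  have hadj : ∀ i : ℕ, i < n → IntervalIntegrable f MeasureTheory.volume
      ((i:ℝ) + 1) (((i + 1 : ℕ):ℝ) + 1) := by
    intro i _
    push_cast
    have hi0 : (0:ℝ) ≤ (i:ℝ) := Nat.cast_nonneg i
    exact hf_int ((i:ℝ) + 1) ((i:ℝ) + 1 + 1) (by linarith) (by linarith)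
  have hsum2 : (∑ i ∈ Finset.range n, ∫ x in ((i + 1 : ℕ):ℝ)..(((i + 1 : ℕ):ℝ) + 1), f x)
      = ∫ x in (1:ℝ)..(d:ℝ), f x := by
    have h0 : (∑ i ∈ Finset.range n, ∫ x in ((i:ℝ) + 1)..(((i + 1 : ℕ):ℝ) + 1), f x)
        = ∫ x in (((0:ℕ):ℝ) + 1)..(((n:ℕ):ℝ) + 1), f x :=
      intervalIntegral.sum_integral_adjacent_intervals
        (a := fun i : ℕ => ((i:ℝ) + 1)) (μ := MeasureTheory.volume) hadj
    have e2 : ((n:ℕ):ℝ) + 1 = (d:ℝ) := by exact_mod_cast hn1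
    rw [show ((0:ℕ):ℝ) + 1 = (1:ℝ) by norm_num, e2] at h0
    rw [← h0]
    exact Finset.sum_congr rfl (fun i _ => by congr 1 <;> push_cast <;> ring)
  rw [hsum1, ← hsum2]
  have harr : ((∑ i ∈ Finset.range n, f ((i + 1 : ℕ))) + f ((n + 1 : ℕ))) -
      (∑ i ∈ Finset.range n, ∫ x in ((i + 1 : ℕ):ℝ)..(((i + 1 : ℕ):ℝ) + 1), f x)
      = (∑ i ∈ Finset.range n,
          (f ((i + 1 : ℕ)) - ∫ x in ((i + 1 : ℕ):ℝ)..(((i + 1 : ℕ):ℝ) + 1), f x))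
        + f ((n + 1 : ℕ)) := by
    rw [Finset.sum_sub_distrib]; ring
  rw [harr]
  exact key
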